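/- Let (X,T) be a topological dynamical system. For each ε > 0, the set E^w_ε := {x ∈ X : ∃ δ > 0 such that D_({i ∈ ℕ : diam(Tⁱ(B_δ(x))) ≤ ε}) ≥ 1 - ε} is open and inversely invariant (T^{-1}(E^w_ε) ⊆ E^w_ε). -/

import Mathlib

open Filter Metric Set
open scoped Classical

noncomputable def lowerDensity (S : Set ℕ) : ℝ :=
  Filter.atTop.liminf (fun n => (((Finset.range (n + 1)).filter (fun i => i ∈ S)).card : ℝ) / (n + 1))

noncomputable def upperDensity (S : Set ℕ) : ℝ :=
  Filter.atTop.limsup (fun n => (((Finset.range (n + 1)).filter (fun i => i ∈ S)).card : ℝ) / (n + 1))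

lemma lowerDensity_mono_card {S S' : Set ℕ}
    (h : ∀ n : ℕ, ((Finset.range (n + 1)).filter (fun i => i ∈ S)).card ≤
      ((Finset.range (n + 1)).filter (fun i => i ∈ S')).card) :
    lowerDensity S ≤ lowerDensity S' := by
  apply Filter.liminf_le_liminf
  · filter_upwards with n
    apply div_le_div_of_nonneg_right ?_ (by positivity)
    exact_mod_cast h n
  · apply Filter.isBoundedUnder_of
    refine ⟨0, fun n => ?_⟩
    positivity
  · apply Filter.IsBoundedUnder.isCoboundedUnder_ge
    apply Filter.isBoundedUnder_of
    refine ⟨1, fun n => ?_⟩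
    have h1 : (((Finset.range (n + 1)).filter (fun i => i ∈ S')).card : ℝ) ≤ (n + 1 : ℝ) := by
      have := Finset.card_filter_le (Finset.range (n + 1)) (fun i => i ∈ S')
      rw [Finset.card_range] at this
      exact_mod_cast this
    calc (((Finset.range (n + 1)).filter (fun i => i ∈ S')).card : ℝ) / (n + 1)
        ≤ (n + 1 : ℝ) / (n + 1) := div_le_div_of_nonneg_right h1 (by positivity)
      _ ≤ 1 := by rw [div_self (by positivity)]

lemma lowerDensity_mono {S S' : Set ℕ} (h : S ⊆ S') : lowerDensity S ≤ lowerDensity S' := by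
  apply lowerDensity_mono_card
  intro n
  apply Finset.card_le_card
  intro a ha
  simp only [Finset.mem_filter] at ha ⊢
  exact ⟨ha.1, h ha.2⟩

lemma lowerDensity_shift {S S' : Set ℕ} (h0 : 0 ∈ S') (h : ∀ i ∈ S, i + 1 ∈ S') :
    lowerDensity S ≤ lowerDensity S' := by
  apply lowerDensity_mono_card
  intro n
  have h1 : (Finset.range (n + 1)).filter (fun i => i ∈ S) ⊆
      insert n ((Finset.range n).filter (fun i => i ∈ S)) := by
    intro i hi
    simp only [Finset.mem_filter, Finset.mem_range, Finset.mem_insert] at hi ⊢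
    rcases Nat.lt_succ_iff_lt_or_eq.mp hi.1 with h' | h'
    · exact Or.inr ⟨h', hi.2⟩
    · exact Or.inl h'
  have h2 : insert 0 (((Finset.range n).filter (fun i => i ∈ S)).image (· + 1)) ⊆
      (Finset.range (n + 1)).filter (fun i => i ∈ S') := by
    intro j hj
    simp only [Finset.mem_insert, Finset.mem_image, Finset.mem_filter, Finset.mem_range] at hj ⊢
    rcases hj with rfl | ⟨i, ⟨hi1, hi2⟩, rfl⟩
    · exact ⟨Nat.succ_pos n, h0⟩
    · exact ⟨Nat.succ_lt_succ hi1, h i hi2⟩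
  calc ((Finset.range (n + 1)).filter (fun i => i ∈ S)).card
      ≤ (insert n ((Finset.range n).filter (fun i => i ∈ S))).card := Finset.card_le_card h1
    _ ≤ ((Finset.range n).filter (fun i => i ∈ S)).card + 1 := Finset.card_insert_le _ _
    _ = (insert 0 (((Finset.range n).filter (fun i => i ∈ S)).image (· + 1))).card := by
        rw [Finset.card_insert_of_notMem (by simp), Finset.card_image_of_injective _
          (fun a b hab => by omega)]
    _ ≤ ((Finset.range (n + 1)).filter (fun i => i ∈ S')).card := Finset.card_le_card h2

theorem Ew_eps_open_and_inv_invariant {X : Type*} [MetricSpace X] [CompactSpace X]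
    (T : X → X) (hT : Continuous T) (ε : ℝ) (hε : 0 < ε) :
    IsOpen {x : X | ∃ δ > 0,
        1 - ε ≤ lowerDensity {i : ℕ | Metric.diam ((T^[i]) '' Metric.closedBall x δ) ≤ ε}} ∧
    T ⁻¹' {x : X | ∃ δ > 0,
        1 - ε ≤ lowerDensity {i : ℕ | Metric.diam ((T^[i]) '' Metric.closedBall x δ) ≤ ε}} ⊆
      {x : X | ∃ δ > 0,
        1 - ε ≤ lowerDensity {i : ℕ | Metric.diam ((T^[i]) '' Metric.closedBall x δ) ≤ ε}} := by
  constructor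
  · rw [Metric.isOpen_iff]
    rintro x ⟨δ, hδ, hx⟩
    refine ⟨δ / 2, by linarith, ?_⟩
    intro y hy
    refine ⟨δ / 2, by linarith, le_trans hx ?_⟩
    apply lowerDensity_mono
    intro i hi
    simp only [Set.mem_setOf_eq] at hi ⊢
    refine le_trans (Metric.diam_mono (Set.image_mono ?_) ?_) hi
    · intro z hz
      simp only [Metric.mem_closedBall] at hz ⊢
      have := Metric.mem_ball.mp hy
      calc dist z x ≤ dist z y + dist y x := dist_triangle _ _ _
        _ ≤ δ := by linarith
    · exact ((isCompact_univ (X := X)).isBounded.subset (Set.subset_univ _))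
  · rintro x ⟨δ, hδ, hx⟩
    obtain ⟨δ₀, hδ₀, hc⟩ := Metric.continuousAt_iff.mp hT.continuousAt δ hδ
    refine ⟨min (δ₀ / 2) (ε / 2), by positivity, le_trans hx ?_⟩
    apply lowerDensity_shift
    · simp only [Set.mem_setOf_eq, Function.iterate_zero, Set.image_id]
      calc Metric.diam (Metric.closedBall x (min (δ₀ / 2) (ε / 2)))
          ≤ 2 * min (δ₀ / 2) (ε / 2) := Metric.diam_closedBall (by positivity)
        _ ≤ 2 * (ε / 2) := by
            apply mul_le_mul_of_nonneg_left (min_le_right _ _) (by norm_num)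
        _ = ε := by ring
    · intro i hi
      simp only [Set.mem_setOf_eq] at hi ⊢
      refine le_trans (Metric.diam_mono ?_ ((isCompact_univ (X := X)).isBounded.subset (Set.subset_univ _))) hi
      rw [Function.iterate_succ, Set.image_comp]
      apply Set.image_mono
      intro z hz
      obtain ⟨w, hw, rfl⟩ := hz
      simp only [Metric.mem_closedBall] at hw ⊢
      have hw' : dist w x < δ₀ := lt_of_le_of_lt (le_trans hw (min_le_left _ _)) (by linarith)
      exact le_of_lt (hc hw')
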